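/- Completeness of the multinomial family: Let d ≥ 1, n ≥ 0, and let N be the set of d-tuples of nonnegative integers summing to n. Suppose g : N → ℝ satisfies Σ_{(n₁,...,n_d) ∈ N} g(n₁,...,n_d) · n!/(n₁!···n_d!) · p₁^{n₁}···p_d^{n_d} = 0 for all probability vectors (p₁,...,p_d) with all entries strictly positive. Then g is identically zero on N. -/

import Mathlib

open MvPolynomial Finset

/-- A function of the form `x ↦ ∑ v ∈ S, c v * ∏ x^v` that vanishes on the positive
orthant vanishes everywhere, and hence all coefficients vanish. -/
private lemma aux_coeff_zero (d : ℕ) (S : Finset (Fin d → ℕ)) (c : (Fin d → ℕ) → ℝ)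
    (H : ∀ p : Fin d → ℝ, (∀ ℓ, 0 < p ℓ) → ∑ v ∈ S, c v * ∏ ℓ, p ℓ ^ v ℓ = 0) :
    ∀ v ∈ S, c v = 0 := by
  set F : MvPolynomial (Fin d) ℝ :=
    ∑ v ∈ S, monomial (Finsupp.equivFunOnFinite.symm v) (c v) with hF
  have hev : ∀ x : Fin d → ℝ, eval x F = ∑ v ∈ S, c v * ∏ ℓ, x ℓ ^ v ℓ := by
    intro x
    rw [hF, map_sum]
    refine Finset.sum_congr rfl fun v _ => ?_
    rw [eval_monomial]
    rw [Finsupp.prod_fintype]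
    · simp [Finsupp.equivFunOnFinite]; left; rfl
    · intro i; simp
  -- F vanishes on the positive orthant, hence everywhere
  have hall : ∀ x : Fin d → ℝ, eval x F = 0 := by
    intro x
    set q : Polynomial ℝ :=
      MvPolynomial.aeval (fun ℓ => Polynomial.C (x ℓ) + Polynomial.X) F with hq
    have hqe : ∀ t : ℝ, q.eval t = eval (fun ℓ => x ℓ + t) F := by
      intro t
      have h1 := MvPolynomial.comp_aeval_apply
        (f := fun ℓ => Polynomial.C (x ℓ) + Polynomial.X) (Polynomial.aeval t) F
      simp only [map_add, Polynomial.aeval_C, Polynomial.aeval_X,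
        Algebra.algebraMap_self, RingHom.id_apply] at h1
      rw [← Polynomial.coe_aeval_eq_eval, hq, h1, ← MvPolynomial.coe_aeval_eq_eval]
      rfl
    have hq0 : q = 0 := by
      apply Polynomial.eq_zero_of_infinite_isRoot
      obtain ⟨M, hM⟩ := Finset.exists_le (Finset.univ.image fun ℓ => -x ℓ) |>.imp
        (fun M hM => fun ℓ => hM (-x ℓ) (Finset.mem_image_of_mem _ (Finset.mem_univ ℓ)))
      apply Set.Infinite.mono (s := Set.Ioi M)
      · intro t ht
        have hpos : ∀ ℓ, 0 < x ℓ + t := by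
          intro ℓ
          have := hM ℓ
          linarith [Set.mem_Ioi.mp ht]
        simp only [Set.mem_setOf_eq, Polynomial.IsRoot, hqe]
        rw [hev, H _ hpos]
      · exact Set.Ioi_infinite M
    have := hqe 0
    rw [hq0] at this
    simpa using this.symm
  have hF0 : F = 0 := MvPolynomial.funext (fun x => by rw [hall, map_zero])
  intro v hv
  have hcoeff : coeff (Finsupp.equivFunOnFinite.symm v) F = c v := by
    rw [hF]
    rw [coeff_sum]
    rw [Finset.sum_eq_single v]
    · simp [coeff_monomial]
    · intro w hw hwv
      rw [coeff_monomial, if_neg]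
      exact fun hc => hwv (Finsupp.equivFunOnFinite.symm.injective hc)
    · intro hvn; exact absurd hv hvn
  rw [hF0] at hcoeff
  simpa using hcoeff.symm

theorem multinomial_complete (d n : ℕ) (hd : 1 ≤ d) (g : (Fin d → ℕ) → ℝ)
    (h : ∀ p : Fin d → ℝ, (∀ ℓ, 0 < p ℓ) → (∑ ℓ, p ℓ) = 1 →
      ∑ v ∈ Finset.Nat.antidiagonalTuple d n,
        g v * (Nat.multinomial Finset.univ v : ℝ) * ∏ ℓ, p ℓ ^ v ℓ = 0) :
    ∀ v ∈ Finset.Nat.antidiagonalTuple d n, g v = 0 := by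
  have key : ∀ v ∈ Finset.Nat.antidiagonalTuple d n,
      g v * (Nat.multinomial Finset.univ v : ℝ) = 0 := by
    apply aux_coeff_zero
    intro p hp
    set s : ℝ := ∑ ℓ, p ℓ with hs
    have hs0 : 0 < s := by
      apply Finset.sum_pos (fun ℓ _ => hp ℓ)
      exact Finset.univ_nonempty_iff.mpr (Fin.pos_iff_nonempty.mp hd)
    have h1 : ∑ v ∈ Finset.Nat.antidiagonalTuple d n,
        g v * (Nat.multinomial Finset.univ v : ℝ) * ∏ ℓ, (p ℓ / s) ^ v ℓ = 0 := by
      apply h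
      · intro ℓ; exact div_pos (hp ℓ) hs0
      · rw [← Finset.sum_div, ← hs, div_self hs0.ne']
  -- multiply through by s^n
    have h2 : ∀ v ∈ Finset.Nat.antidiagonalTuple d n,
        g v * (Nat.multinomial Finset.univ v : ℝ) * ∏ ℓ, p ℓ ^ v ℓ
        = s ^ n * (g v * (Nat.multinomial Finset.univ v : ℝ) * ∏ ℓ, (p ℓ / s) ^ v ℓ) := by
      intro v hv
      have hvs : ∑ ℓ, v ℓ = n := by
        simpa using (Finset.Nat.mem_antidiagonalTuple.mp hv)
      have hsn : (s : ℝ) ^ n ≠ 0 := pow_ne_zero _ hs0.ne'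
      have heq : ∏ ℓ, (p ℓ / s) ^ v ℓ = (∏ ℓ, p ℓ ^ v ℓ) / s ^ n := by
        simp_rw [div_pow]
        rw [Finset.prod_div_distrib, Finset.prod_pow_eq_pow_sum, hvs]
      rw [heq]
      field_simp
    rw [Finset.sum_congr rfl h2, ← Finset.mul_sum, h1, mul_zero]
  intro v hv
  have := key v hv
  have hmp : (0 : ℝ) < (Nat.multinomial Finset.univ v : ℝ) := by
    exact_mod_cast Nat.multinomial_pos _ _
  exact (mul_eq_zero.mp this).resolve_right hmp.ne'
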